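/- Let a_n, b_n be sequences with a_n/n → α and b_n/n → β. Then γ_n := 2^{-a_n-b_n}/(2n+a_n+b_n) · Γ(n+1)Γ(n+a_n+b_n+1)/(Γ(n+a_n)Γ(n+b_n)) satisfies γ_n = n · 2^{-a_n-b_n}(1+α_n+β_n)^{n+a_n+b_n+1/2} / ((1+α_n)^{n+a_n-1/2}(1+β_n)^{n+b_n-1/2}(2+α_n+β_n)) · (1+O(1/n)), where α_n=a_n/n, β_n=b_n/n. -/

import Mathlib

/- STATEMENT 9: If a_n/n → α and b_n/n → β, then
γ_n := 2^{-a_n-b_n}/(2n+a_n+b_n) · Γ(n+1)Γ(n+a_n+b_n+1)/(Γ(n+a_n)Γ(n+b_n))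
satisfies
γ_n = n · 2^{-a_n-b_n}(1+α_n+β_n)^{n+a_n+b_n+1/2}
      / ((1+α_n)^{n+a_n-1/2}(1+β_n)^{n+b_n-1/2}(2+α_n+β_n)) · (1+O(1/n)),
where α_n = a_n/n, β_n = b_n/n. -/

noncomputable def jacobiGammaSeq (a b : ℕ → ℝ) (n : ℕ) : ℝ :=
  (2 : ℝ) ^ (-(a n) - b n) / (2 * (n : ℝ) + a n + b n) *
    (Real.Gamma ((n : ℝ) + 1) * Real.Gamma ((n : ℝ) + a n + b n + 1) /
      (Real.Gamma ((n : ℝ) + a n) * Real.Gamma ((n : ℝ) + b n)))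

/-- The equivalent of `γ_n` given by Stirling's formula. -/
noncomputable def jacobiGammaApprox (a b : ℕ → ℝ) (n : ℕ) : ℝ :=
  (n : ℝ) * (2 : ℝ) ^ (-(a n) - b n) *
      (1 + a n / n + b n / n) ^ ((n : ℝ) + a n + b n + 1 / 2) /
    ((1 + a n / n) ^ ((n : ℝ) + a n - 1 / 2) * (1 + b n / n) ^ ((n : ℝ) + b n - 1 / 2) *
      (2 + a n / n + b n / n))




lemma log_one_add_sq {t : ℝ} (h0 : 0 ≤ t) (h1 : t ≤ 1/2) :
    |Real.log (1 + t) - t| ≤ 2 * t^2 := by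
  have h2 : |(-t)| < 1 := by rw [abs_neg, abs_of_nonneg h0]; linarith
  have key := Real.abs_log_sub_add_sum_range_le h2 1
  simp only [Finset.sum_range_succ, Finset.sum_range_zero] at key
  rw [abs_neg, abs_of_nonneg h0] at key
  norm_num at key
  rw [neg_add_eq_sub] at key
  refine le_trans key ?_
  rw [div_le_iff₀ (by linarith)]
  nlinarith [sq_nonneg t]

lemma log_one_add_cubic {t : ℝ} (h0 : 0 ≤ t) (h1 : t ≤ 1/2) :
    |Real.log (1+t) - (t - t^2/2 + t^3/3)| ≤ 2*t^4 := by
  have h2 : |(-t)| < 1 := by rw [abs_neg, abs_of_nonneg h0]; linarith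
  have key := Real.abs_log_sub_add_sum_range_le h2 3
  simp only [Finset.sum_range_succ, Finset.sum_range_zero] at key
  rw [abs_neg, abs_of_nonneg h0] at key
  norm_num at key
  have e : Real.log (1+t) - (t - t^2/2 + t^3/3) = -t + t^2/2 + -t^3/3 + Real.log (1+t) := by ring
  rw [e]
  refine le_trans (le_of_eq (by ring_nf) |>.trans key) ?_
  rw [div_le_iff₀ (by linarith)]
  nlinarith [pow_nonneg h0 4, pow_nonneg h0 2]

noncomputable def binetG (x : ℝ) : ℝ := Real.log (Real.Gamma x) - (x - 1/2) * Real.log x + x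

lemma logGamma_add_one {x : ℝ} (hx : 0 < x) :
    Real.log (Real.Gamma (x+1)) = Real.log x + Real.log (Real.Gamma x) := by
  rw [Real.Gamma_add_one hx.ne', Real.log_mul hx.ne' (Real.Gamma_pos_of_pos hx).ne']

lemma binetG_step {x : ℝ} (hx : 0 < x) :
    binetG x - binetG (x+1) = (x + 1/2) * (Real.log (x+1) - Real.log x) - 1 := by
  unfold binetG
  rw [logGamma_add_one hx]
  ring

lemma hfun_bounds {x : ℝ} (hx : 40 ≤ x) :
    0 ≤ (x + 1/2) * (Real.log (x+1) - Real.log x) - 1 ∧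
      (x + 1/2) * (Real.log (x+1) - Real.log x) - 1 ≤ 1 / x^2 := by
  have hx0 : (0:ℝ) < x := by linarith
  have hu0 : (0:ℝ) < 1/x := by positivity
  have hu : (1:ℝ)/x ≤ 1/40 := by
    rw [div_le_div_iff₀ hx0 (by norm_num)]; linarith
  have hlog : Real.log (x+1) - Real.log x = Real.log (1 + 1/x) := by
    rw [← Real.log_div (by linarith) hx0.ne']
    congr 1
    field_simp
  have hcub := log_one_add_cubic hu0.le (by linarith)
  obtain ⟨hc1, hc2⟩ := abs_le.mp hcub
  set u := 1/x with hu'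
  have hxu : x * u = 1 := by rw [hu', mul_one_div_cancel hx0.ne']
  have e2 : x * u^2 = u := by rw [pow_two, ← mul_assoc, hxu, one_mul]
  have e3 : x * u^3 = u^2 := by rw [pow_succ, ← mul_assoc, e2, ← pow_two]
  have e4 : x * u^4 = u^3 := by rw [pow_succ, ← mul_assoc, e3, ← pow_succ]
  have hx2 : (1:ℝ)/x^2 = u^2 := by rw [hu']; ring
  rw [hlog, hx2]
  have hcube : u^3 ≤ u^2 * (1/40) := by nlinarith [sq_nonneg u]
  have hquad : u^4 ≤ u^2 * (1/1600) := by nlinarith [sq_nonneg u, sq_nonneg (u - 1/40)]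
  have hsc1 := mul_le_mul_of_nonneg_left hc1 (show (0:ℝ) ≤ x + 1/2 by linarith)
  have hsc2 := mul_le_mul_of_nonneg_left hc2 (show (0:ℝ) ≤ x + 1/2 by linarith)
  constructor <;> nlinarith [hsc1, hsc2, e2, e3, e4, hxu, hu0.le, hu, hcube, hquad, sq_nonneg u]

lemma binetG_sub_le {x : ℝ} (hx : 40 ≤ x) (m : ℕ) :
    0 ≤ binetG x - binetG (x + m) ∧ binetG x - binetG (x + m) ≤ 1/(x-1) - 1/(x-1+m) := by
  induction m with
  | zero => simp
  | succ k ih =>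
    have hk0 : (0:ℝ) ≤ (k:ℝ) := Nat.cast_nonneg k
    have hxk : (40:ℝ) ≤ x + k := by linarith
    have hb := hfun_bounds hxk
    have hstep := binetG_step (show (0:ℝ) < x + k by linarith)
    have hpos : (0:ℝ) < x - 1 + k := by linarith
    have hpos2 : (0:ℝ) < x + k := by linarith
    push_cast
    rw [show x + ((k:ℝ)+1) = (x + (k:ℝ)) + 1 by ring,
        show x - 1 + ((k:ℝ)+1) = x + (k:ℝ) by ring]
    have key : 1/(x+(k:ℝ))^2 ≤ 1/(x-1+k) - 1/(x+k) := by
      rw [show (1:ℝ)/(x-1+k) - 1/(x+k) = 1/((x-1+k)*(x+k)) by field_simp; ring]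
      rw [div_le_div_iff₀ (by positivity) (by positivity)]
      nlinarith
    constructor
    · linarith [ih.1, hb.1, hstep]
    · linarith [ih.2, hb.2, hstep, key]

lemma binetG_interp {x y : ℝ} (hx : 40 ≤ x) (h1 : x ≤ y) (h2 : y ≤ x + 1) :
    |binetG y - binetG x| ≤ 6 / x := by
  have hx0 : (0:ℝ) < x := by linarith
  have hy0 : (0:ℝ) < y := by linarith
  have hx1 : (0:ℝ) < x - 1 := by linarith
  -- log Gamma steps
  have hstep1 : Real.log (Real.Gamma (x+1)) - Real.log (Real.Gamma x) = Real.log x := by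
    rw [logGamma_add_one hx0]; ring
  have hstep0 : Real.log (Real.Gamma x) - Real.log (Real.Gamma (x-1)) = Real.log (x-1) := by
    have h := logGamma_add_one hx1
    rw [sub_add_cancel] at h
    rw [h]; ring
  -- secant bounds from convexity
  have hup : Real.log (Real.Gamma y) - Real.log (Real.Gamma x) ≤ (y - x) * Real.log x := by
    rcases eq_or_lt_of_le h1 with h | h
    · rw [← h]; simp
    · have hs := Real.convexOn_log_Gamma.secant_mono (a := x) (x := y) (y := x+1)
        (Set.mem_Ioi.mpr hx0) (Set.mem_Ioi.mpr hy0)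
        (Set.mem_Ioi.mpr (show (0:ℝ) < x+1 by linarith))
        h.ne' (by intro hc; linarith [hc ▸ (rfl : x+1 = x+1)]) h2
      simp only [Function.comp_apply] at hs
      rw [show x + 1 - x = (1:ℝ) by ring, div_one, hstep1] at hs
      rw [div_le_iff₀ (by linarith : (0:ℝ) < y - x)] at hs
      linarith [hs]
  have hlo : (y - x) * Real.log (x-1) ≤ Real.log (Real.Gamma y) - Real.log (Real.Gamma x) := by
    rcases eq_or_lt_of_le h1 with h | h
    · rw [← h]; simp
    · have hs := Real.convexOn_log_Gamma.secant_mono (a := x) (x := x-1) (y := y)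
        (Set.mem_Ioi.mpr hx0) (Set.mem_Ioi.mpr hx1) (Set.mem_Ioi.mpr hy0)
        (by intro hc; linarith [hc ▸ (rfl : x-1 = x-1)]) h.ne' (by linarith)
      simp only [Function.comp_apply] at hs
      rw [show x - 1 - x = (-1:ℝ) by ring, div_neg, div_one, neg_sub, hstep0] at hs
      rw [le_div_iff₀ (by linarith : (0:ℝ) < y - x)] at hs
      linarith [hs]
  -- bounds on log y - log x
  obtain ⟨v, hv⟩ : ∃ v : ℝ, v = 1/x := ⟨_, rfl⟩
  have hv0 : 0 < v := by rw [hv]; positivity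
  have hxv : x * v = 1 := by rw [hv]; field_simp
  obtain ⟨t, ht⟩ : ∃ t : ℝ, t = (y - x)/x := ⟨_, rfl⟩
  have ht0 : (0:ℝ) ≤ t := by rw [ht]; exact div_nonneg (by linarith) hx0.le
  have ht1 : t ≤ v := by rw [ht, hv, div_le_div_iff₀ hx0 hx0]; nlinarith
  have hv2 : v ≤ 1/2 := by rw [hv, div_le_div_iff₀ hx0 (by norm_num)]; linarith
  have ht2 : t ≤ 1/2 := le_trans ht1 hv2
  have hD : Real.log y - Real.log x = Real.log (1+t) := by
    rw [← Real.log_div hy0.ne' hx0.ne']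
    congr 1
    rw [ht]; field_simp; ring
  obtain ⟨hq1, hq2⟩ := abs_le.mp (log_one_add_sq ht0 ht2)
  rw [← hD] at hq1 hq2
  have hD0 : (0:ℝ) ≤ Real.log y - Real.log x := by
    have := Real.log_le_log hx0 h1
    linarith
  -- log x - log (x-1) small
  have hsm : Real.log x - Real.log (x-1) ≤ 2*v := by
    have e : Real.log x - Real.log (x-1) = Real.log (1 + 1/(x-1)) := by
      rw [← Real.log_div hx0.ne' hx1.ne']
      congr 1
      field_simp; ring
    rw [e]
    have hb := Real.log_le_sub_one_of_pos (show (0:ℝ) < 1 + 1/(x-1) by positivity)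
    have : (1:ℝ)/(x-1) ≤ 2*v := by
      rw [hv, show (2:ℝ)*(1/x) = 2/x by ring, div_le_div_iff₀ hx1 hx0]; linarith
    linarith
  have hsm0 : (0:ℝ) ≤ Real.log x - Real.log (x-1) := by
    have := Real.log_le_log hx1 (by linarith : x - 1 ≤ x)
    linarith
  -- auxiliary products
  have hxt : x * t = y - x := by rw [ht]; field_simp
  have m4 : x * t^2 = (y-x) * t := by rw [pow_two, ← mul_assoc, hxt]
  have m5 : (y-x) * t ≤ t := by nlinarith
  have m11 : t^2 ≤ t * (1/2) := by nlinarith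
  have hq1' : t - 2*t^2 ≤ Real.log y - Real.log x := by linarith
  have hq2' : Real.log y - Real.log x ≤ t + 2*t^2 := by linarith
  have m1 : (x - 1/2) * (Real.log y - Real.log x) ≤ (y - 1/2) * (Real.log y - Real.log x) :=
    mul_le_mul_of_nonneg_right (by linarith) hD0
  have m2 : (x - 1/2) * (t - 2*t^2) ≤ (x - 1/2) * (Real.log y - Real.log x) :=
    mul_le_mul_of_nonneg_left hq1' (by linarith)
  have m9 : (y - 1/2) * (Real.log y - Real.log x) ≤ (x + 1/2) * (Real.log y - Real.log x) :=
    mul_le_mul_of_nonneg_right (by linarith) hD0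
  have m10 : (x + 1/2) * (Real.log y - Real.log x) ≤ (x + 1/2) * (t + 2*t^2) :=
    mul_le_mul_of_nonneg_left hq2' (by linarith)
  have m7 : (y-x) * (Real.log x - Real.log (x-1)) ≤ (y-x) * (2*v) :=
    mul_le_mul_of_nonneg_left hsm (by linarith)
  have m8 : (y-x) * (2*v) ≤ 2*v := by
    have := mul_le_mul_of_nonneg_right (show y - x ≤ 1 by linarith)
      (show (0:ℝ) ≤ 2*v by linarith)
    rw [one_mul] at this
    exact this
  have m7' : (y-x) * Real.log (x-1) = (y-x) * Real.log x - (y-x)*(Real.log x - Real.log (x-1)) := by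
    ring
  have hgdiff : binetG y - binetG x =
      (Real.log (Real.Gamma y) - Real.log (Real.Gamma x))
      - (y - 1/2)*Real.log y + (x - 1/2)*Real.log x + (y - x) := by
    unfold binetG; ring
  have P_up : (y - 1/2) * (Real.log y - Real.log x) ≤ (y-x) + 3*v := by
    have h := le_trans m9 m10
    rw [show (x + 1/2) * (t + 2*t^2) = x*t + 2*(x*t^2) + t/2 + t^2 by ring] at h
    linarith [h, hxt, m4, m5, m11, ht1, ht0]
  have P_lo : (y-x) - 3*v ≤ (y - 1/2) * (Real.log y - Real.log x) := by
    have h := le_trans m2 m1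
    rw [show (x - 1/2) * (t - 2*t^2) = x*t - 2*(x*t^2) - t/2 + t^2 by ring] at h
    linarith [h, hxt, m4, m5, m11, ht1, ht0, sq_nonneg t]
  have e2 : (y - 1/2) * (Real.log y - Real.log x)
      = (y - 1/2)*Real.log y - (x - 1/2)*Real.log x - (y-x)*Real.log x := by ring
  rw [hgdiff, abs_le, show (6:ℝ)/x = 6*v by rw [hv]; ring]
  constructor
  · linarith [hlo, m7, m8, m7', P_up, e2]
  · linarith [hup, P_lo, e2]

lemma binetG_two_point {x y : ℝ} (hx : 41 ≤ x) (hxy : x ≤ y) :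
    |binetG y - binetG x| ≤ 8 / x := by
  have hx0 : (0:ℝ) < x := by linarith
  set m := ⌊y - x⌋₊ with hm
  have h0 : (0:ℝ) ≤ y - x := by linarith
  have hm1 : (m:ℝ) ≤ y - x := Nat.floor_le h0
  have hm2 : y - x < m + 1 := Nat.lt_floor_add_one _
  have hmc : (0:ℝ) ≤ (m:ℝ) := Nat.cast_nonneg m
  have h1 : |binetG y - binetG (x+m)| ≤ 6/(x+m) :=
    binetG_interp (by linarith) (by linarith) (by linarith)
  have h2 := binetG_sub_le (by linarith : (40:ℝ) ≤ x) m
  have h3 : |binetG (x+m) - binetG x| ≤ 2/x := by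
    rw [abs_le]
    have hp : (0:ℝ) ≤ 1/(x-1+m) := le_of_lt (div_pos one_pos (by linarith))
    have hq : (1:ℝ)/(x-1) ≤ 2/x := by rw [div_le_div_iff₀ (by linarith) hx0]; linarith
    constructor
    · have h2x : (0:ℝ) ≤ 2/x := by positivity
      linarith [h2.2]
    · linarith [h2.1]
  have h4 : 6/(x+m) ≤ 6/x := by
    apply div_le_div_of_nonneg_left (by norm_num) hx0
    linarith
  calc |binetG y - binetG x|
      ≤ |binetG y - binetG (x+m)| + |binetG (x+m) - binetG x| := abs_sub_le _ _ _
    _ ≤ 6/x + 2/x := add_le_add (le_trans h1 h4) h3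
    _ = 8 / x := by ring

lemma key_ratio {x p q : ℝ} (hx : 48 ≤ x) (hp : 0 ≤ p) (hq : 0 ≤ q) :
    |(2:ℝ) ^ (-p - q) / (2 * x + p + q) *
        (Real.Gamma (x + 1) * Real.Gamma (x + p + q + 1) /
          (Real.Gamma (x + p) * Real.Gamma (x + q))) /
      (x * (2:ℝ) ^ (-p - q) * (1 + p / x + q / x) ^ (x + p + q + 1 / 2) /
        ((1 + p / x) ^ (x + p - 1 / 2) * (1 + q / x) ^ (x + q - 1 / 2) *
          (2 + p / x + q / x))) - 1| ≤ 48 / x := by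
  have hx0 : (0:ℝ) < x := by linarith
  have hxp : (0:ℝ) < x + p := by linarith
  have hxq : (0:ℝ) < x + q := by linarith
  have hxpq : (0:ℝ) < x + p + q := by linarith
  have h2x : (0:ℝ) < 2*x + p + q := by linarith
  have hGx := Real.Gamma_pos_of_pos hx0
  have hGp := Real.Gamma_pos_of_pos hxp
  have hGq := Real.Gamma_pos_of_pos hxq
  have hGpq := Real.Gamma_pos_of_pos hxpq
  -- exp form of the numerator
  have hseq : (2:ℝ) ^ (-p - q) / (2 * x + p + q) *
        (Real.Gamma (x + 1) * Real.Gamma (x + p + q + 1) /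
          (Real.Gamma (x + p) * Real.Gamma (x + q)))
      = Real.exp (Real.log 2 * (-p - q) + (Real.log x + Real.log (Real.Gamma x))
          + (Real.log (x+p+q) + Real.log (Real.Gamma (x+p+q)))
          - Real.log (2*x+p+q) - Real.log (Real.Gamma (x+p)) - Real.log (Real.Gamma (x+q))) := by
    rw [Real.Gamma_add_one hx0.ne', Real.Gamma_add_one hxpq.ne']
    simp only [Real.exp_add, Real.exp_sub]
    rw [Real.exp_log hx0, Real.exp_log hGx, Real.exp_log hxpq, Real.exp_log hGpq,
        Real.exp_log h2x, Real.exp_log hGp, Real.exp_log hGq,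
        ← Real.rpow_def_of_pos (by norm_num : (0:ℝ) < 2)]
    ring
  -- exp form of the denominator
  have b1 : 1 + p/x + q/x = (x+p+q)/x := by field_simp
  have b2 : (1:ℝ) + p/x = (x+p)/x := by field_simp
  have b3 : (1:ℝ) + q/x = (x+q)/x := by field_simp
  have b4 : 2 + p/x + q/x = (2*x+p+q)/x := by field_simp
  have happ : x * (2:ℝ) ^ (-p - q) * (1 + p / x + q / x) ^ (x + p + q + 1 / 2) /
        ((1 + p / x) ^ (x + p - 1 / 2) * (1 + q / x) ^ (x + q - 1 / 2) *
          (2 + p / x + q / x))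
      = Real.exp ((Real.log x + Real.log 2 * (-p - q)
          + Real.log ((x+p+q)/x) * (x + p + q + 1/2))
          - (Real.log ((x+p)/x) * (x + p - 1/2) + Real.log ((x+q)/x) * (x + q - 1/2)
          + Real.log ((2*x+p+q)/x))) := by
    rw [b1, b2, b3, b4]
    simp only [Real.exp_add, Real.exp_sub]
    rw [Real.exp_log hx0, Real.exp_log (div_pos h2x hx0),
        ← Real.rpow_def_of_pos (div_pos hxpq hx0), ← Real.rpow_def_of_pos (div_pos hxp hx0),
        ← Real.rpow_def_of_pos (div_pos hxq hx0), ← Real.rpow_def_of_pos (by norm_num : (0:ℝ) < 2)]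
  rw [hseq, happ, ← Real.exp_sub]
  -- identify the exponent with Binet differences
  have hEA : (Real.log 2 * (-p - q) + (Real.log x + Real.log (Real.Gamma x))
          + (Real.log (x+p+q) + Real.log (Real.Gamma (x+p+q)))
          - Real.log (2*x+p+q) - Real.log (Real.Gamma (x+p)) - Real.log (Real.Gamma (x+q)))
      - ((Real.log x + Real.log 2 * (-p - q)
          + Real.log ((x+p+q)/x) * (x + p + q + 1/2))
          - (Real.log ((x+p)/x) * (x + p - 1/2) + Real.log ((x+q)/x) * (x + q - 1/2)
          + Real.log ((2*x+p+q)/x)))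
      = binetG x + binetG (x+p+q) - binetG (x+p) - binetG (x+q) := by
    rw [Real.log_div hxpq.ne' hx0.ne', Real.log_div hxp.ne' hx0.ne',
        Real.log_div hxq.ne' hx0.ne', Real.log_div h2x.ne' hx0.ne']
    unfold binetG
    ring
  rw [hEA]
  -- bound the Binet difference
  have t1 := binetG_two_point (show (41:ℝ) ≤ x by linarith) (show x ≤ x + p by linarith)
  have t2 := binetG_two_point (show (41:ℝ) ≤ x by linarith) (show x ≤ x + q by linarith)
  have t3 := binetG_two_point (show (41:ℝ) ≤ x by linarith) (show x ≤ x + p + q by linarith)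
  obtain ⟨t1a, t1b⟩ := abs_le.mp t1
  obtain ⟨t2a, t2b⟩ := abs_le.mp t2
  obtain ⟨t3a, t3b⟩ := abs_le.mp t3
  obtain ⟨v, hv⟩ : ∃ v : ℝ, v = 8/x := ⟨_, rfl⟩
  rw [← hv] at t1a t1b t2a t2b t3a t3b
  have hv0 : 0 < v := by rw [hv]; positivity
  have hL : |binetG x + binetG (x+p+q) - binetG (x+p) - binetG (x+q)| ≤ 3*v := by
    rw [abs_le]
    constructor
    · have e : binetG x + binetG (x+p+q) - binetG (x+p) - binetG (x+q)
          = (binetG (x+p+q) - binetG x) - (binetG (x+p) - binetG x) - (binetG (x+q) - binetG x) := by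
        ring
      rw [e]; linarith
    · have e : binetG x + binetG (x+p+q) - binetG (x+p) - binetG (x+q)
          = (binetG (x+p+q) - binetG x) - (binetG (x+p) - binetG x) - (binetG (x+q) - binetG x) := by
        ring
      rw [e]; linarith
  have hL1 : |binetG x + binetG (x+p+q) - binetG (x+p) - binetG (x+q)| ≤ 1 := by
    refine le_trans hL ?_
    rw [hv]
    rw [show (3:ℝ)*(8/x) = 24/x by ring, div_le_one hx0]
    linarith
  have := Real.abs_exp_sub_one_le hL1
  refine le_trans this ?_
  have : 2 * |binetG x + binetG (x+p+q) - binetG (x+p) - binetG (x+q)| ≤ 2 * (3*v) := by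
    linarith [hL]
  refine le_trans this ?_
  rw [hv]
  rw [show (2:ℝ)*(3*(8/x)) = 48/x by ring]


theorem jacobiGamma_stirling (a b : ℕ → ℝ) (α β : ℝ)
    (ha0 : ∀ n, 0 ≤ a n) (hb0 : ∀ n, 0 ≤ b n)
    (hα : Filter.Tendsto (fun n => a n / n) Filter.atTop (nhds α))
    (hβ : Filter.Tendsto (fun n => b n / n) Filter.atTop (nhds β))
    (hα0 : 0 ≤ α) (hβ0 : 0 ≤ β) :
    ∃ C > (0 : ℝ), ∃ N : ℕ, ∀ n ≥ N,
      |jacobiGammaSeq a b n / jacobiGammaApprox a b n - 1| ≤ C / n := by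
  refine ⟨48, by norm_num, 48, fun n hn => ?_⟩
  have hx : (48:ℝ) ≤ (n:ℝ) := by exact_mod_cast hn
  have h := key_ratio hx (ha0 n) (hb0 n)
  unfold jacobiGammaSeq jacobiGammaApprox
  exact h
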